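/- Let V_max, K_m, V, A₀ be positive reals, let t₀ ≤ t₁ be reals, and let A : ℝ → ℝ satisfy A(t₀) = A₀, A(t) > 0 for all t ∈ [t₀, t₁], and A'(t) = −V_max·A(t)/(K_m + A(t)/V) for all t ∈ [t₀, t₁] (in the sense of HasDerivAt). Then for every t ∈ [t₀, t₁], (K_m/V_max)·(ln A(t) − ln A₀) + (A(t) − A₀)/(V_max·V) = −(t − t₀); equivalently, A(t) = A₀ · exp( −(A(t) − A₀)/(K_m·V) − (V_max/K_m)·(t − t₀) ). -/
import Mathlib


/-- Separation of variables for the drug-amount equation `Ȧ = -V_max A/(K_m + A/V)`: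
if `A(t₀) = A₀` and `A` is positive and satisfies the ODE on `[t₀, t₁]`, then for all
`t ∈ [t₀, t₁]`, `(K_m/V_max)(ln A(t) - ln A₀) + (A(t) - A₀)/(V_max V) = -(t - t₀)`,
equivalently `A(t) = A₀ exp(-(A(t) - A₀)/(K_m V) - (V_max/K_m)(t - t₀))`. -/
theorem drug_amount_implicit_solution (Vmax Km V A₀ : ℝ)
    (hVmax : 0 < Vmax) (hKm : 0 < Km) (hV : 0 < V) (hA₀ : 0 < A₀)
    (t₀ t₁ : ℝ) (ht : t₀ ≤ t₁) (A : ℝ → ℝ)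
    (hinit : A t₀ = A₀)
    (hpos : ∀ t ∈ Set.Icc t₀ t₁, 0 < A t)
    (hode : ∀ t ∈ Set.Icc t₀ t₁,
      HasDerivAt A (-(Vmax * A t) / (Km + A t / V)) t) :
    ∀ t ∈ Set.Icc t₀ t₁,
      (Km / Vmax) * (Real.log (A t) - Real.log A₀) + (A t - A₀) / (Vmax * V) =
          -(t - t₀) ∧
      A t = A₀ * Real.exp (-(A t - A₀) / (Km * V) - (Vmax / Km) * (t - t₀)) := by
  intro t htmem
  obtain ⟨ht0, ht1⟩ := htmem
  set F : ℝ → ℝ := fun s => (Km / Vmax) * Real.log (A s) + A s / (Vmax * V) + s with hF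
  have key : ∀ s ∈ Set.Icc t₀ t₁, HasDerivAt F 0 s := by
    intro s hs
    have hApos := hpos s hs
    have hA' := hode s hs
    have hlog := hA'.log (ne_of_gt hApos)
    have h1 : HasDerivAt F ((Km / Vmax) * ((-(Vmax * A s) / (Km + A s / V)) / A s)
        + (-(Vmax * A s) / (Km + A s / V)) / (Vmax * V) + 1) s :=
      ((hlog.const_mul (Km / Vmax)).add (hA'.div_const (Vmax * V))).add (hasDerivAt_id s)
    convert h1 using 1
    have hden : (0:ℝ) < Km + A s / V := by positivity
    field_simp
    ring
  have hconst : ∀ s ∈ Set.Icc t₀ t, F s = F t₀ := by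
    apply constant_of_has_deriv_right_zero
    · intro s hs
      exact (key s ⟨hs.1, hs.2.trans ht1⟩).continuousAt.continuousWithinAt
    · intro s hs
      exact (key s ⟨hs.1, hs.2.le.trans ht1⟩).hasDerivWithinAt
  have hFt : F t = F t₀ := hconst t ⟨ht0, le_refl t⟩
  have hAt : 0 < A t := hpos t ⟨ht0, ht1⟩
  simp only [hF, hinit] at hFt
  have eq1 : (Km / Vmax) * (Real.log (A t) - Real.log A₀) + (A t - A₀) / (Vmax * V) =
      -(t - t₀) := by
    have : (A t - A₀) / (Vmax * V) = A t / (Vmax * V) - A₀ / (Vmax * V) := by ring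
    rw [this]
    linarith [hFt]
  refine ⟨eq1, ?_⟩
  have he : -(A t - A₀) / (Km * V) - (Vmax / Km) * (t - t₀) =
      Real.log (A t) - Real.log A₀ := by
    field_simp at eq1 ⊢
    nlinarith [eq1, mul_pos hVmax hV, mul_pos hKm hV]
  rw [he, Real.exp_sub, Real.exp_log hAt, Real.exp_log hA₀]
  field_simp
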